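/- Let F be a nonarchimedean local field with unramified additive character ψ and self-dual Haar measure. For every integer m > 0 and every b ∈ F^× with |b| > q^{2m}, one has ∫_{ϖ^m O} ∫_{ϖ^m O} ψ(bxy) dx dy = |b|^{-1}. -/

import Mathlib

open MeasureTheory

/-- A bundle of data axiomatizing a nonarchimedean local field `F` together with
its ring of integers `O`, a uniformizer `ϖ`, residue cardinality `q`, absolute
value `abv` (normalized by `abv ϖ = q⁻¹`), an unramified additive character `ψ`
(trivial on `O`, nontrivial on `ϖ⁻¹O`), and the self-dual additive Haar measure
`μ` (with `μ O = 1`). -/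
structure NonarchLocalField (F : Type) [Field F] [MeasurableSpace F] where
  μ : Measure F
  O : Subring F
  ϖ : F
  q : ℝ
  abv : F → ℝ
  ψ : F → ℂ
  one_lt_q : 1 < q
  ϖ_ne_zero : ϖ ≠ 0
  abv_zero : abv 0 = 0
  abv_pos : ∀ x : F, x ≠ 0 → 0 < abv x
  abv_mul : ∀ x y : F, abv (x * y) = abv x * abv y
  abv_add : ∀ x y : F, abv (x + y) ≤ max (abv x) (abv y)
  abv_ϖ : abv ϖ = q⁻¹
  abv_discrete : ∀ x : F, x ≠ 0 → ∃ n : ℤ, abv x = q ^ n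
  mem_O : ∀ x : F, x ∈ O ↔ abv x ≤ 1
  ψ_add : ∀ x y : F, ψ (x + y) = ψ x * ψ y
  ψ_meas : Measurable ψ
  ψ_triv : ∀ x : F, abv x ≤ 1 → ψ x = 1
  ψ_nontriv : ∃ x : F, abv x ≤ q ∧ ψ x ≠ 1
  μ_add_invariant : ∀ (a : F) (s : Set F), μ ((a + ·) '' s) = μ s
  μ_smul : ∀ (a : F), a ≠ 0 → ∀ s : Set F, μ ((a * ·) '' s) = ENNReal.ofReal (abv a) * μ s
  μ_O : μ (O : Set F) = 1

namespace NonarchLocalField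

open Set

variable {F : Type} [Field F] [MeasurableSpace F] (D : NonarchLocalField F)

section Basic

theorem q_pos : 0 < D.q := zero_lt_one.trans D.one_lt_q

theorem q_ne_zero : D.q ≠ 0 := D.q_pos.ne'

theorem zq_pos (j : ℤ) : 0 < D.q ^ j := zpow_pos D.q_pos j

theorem abv_nonneg (x : F) : 0 ≤ D.abv x := by
  rcases eq_or_ne x 0 with h | h
  · simp [h, D.abv_zero]
  · exact (D.abv_pos x h).le

theorem abv_one : D.abv 1 = 1 := by
  have h := D.abv_mul 1 1
  rw [one_mul] at h
  have h1 : 0 < D.abv 1 := D.abv_pos 1 one_ne_zero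
  nlinarith

theorem abv_inv {x : F} (hx : x ≠ 0) : D.abv x⁻¹ = (D.abv x)⁻¹ := by
  have h := D.abv_mul x x⁻¹
  rw [mul_inv_cancel₀ hx, D.abv_one] at h
  have h1 : D.abv x ≠ 0 := (D.abv_pos x hx).ne'
  field_simp at h ⊢
  linarith [h]

theorem abv_neg (x : F) : D.abv (-x) = D.abv x := by
  have hm1 : D.abv (-1 : F) = 1 := by
    have h := D.abv_mul (-1) (-1)
    rw [neg_one_mul, neg_neg, D.abv_one] at h
    have h1 : 0 < D.abv (-1 : F) := D.abv_pos _ (by simp)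
    nlinarith
  have := D.abv_mul (-1) x
  rw [neg_one_mul, hm1, one_mul] at this
  exact this

theorem abv_sub_le (x y : F) : D.abv (x - y) ≤ max (D.abv x) (D.abv y) := by
  have := D.abv_add x (-y)
  rw [D.abv_neg y] at this
  simpa [sub_eq_add_neg] using this

/-- `|ϖ^j| = q^(-j)` for integer powers. -/
theorem abv_pi_zpow (j : ℤ) : D.abv (D.ϖ ^ j) = D.q ^ (-j) := by
  have hnat : ∀ k : ℕ, D.abv (D.ϖ ^ k) = (D.q)⁻¹ ^ k := by
    intro k
    induction k with
    | zero => simp [D.abv_one]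
    | succ n ih => rw [pow_succ, D.abv_mul, ih, D.abv_ϖ, pow_succ]
  induction j using Int.rec with
  | ofNat k =>
      simp only [Int.ofNat_eq_coe, zpow_natCast]
      rw [hnat k, inv_pow, ← zpow_natCast D.q k, ← zpow_neg]
  | negSucc k =>
      rw [zpow_negSucc, D.abv_inv (pow_ne_zero _ D.ϖ_ne_zero), hnat, inv_pow, inv_inv]
      rw [← zpow_natCast D.q (k+1)]
      norm_cast

theorem pi_zpow_ne_zero (j : ℤ) : (D.ϖ ^ j : F) ≠ 0 := zpow_ne_zero j D.ϖ_ne_zero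

/-- Discreteness: strict inequality jumps a full power. -/
theorem abv_le_of_lt {x : F} {j : ℤ} (h : D.abv x < D.q ^ (j + 1)) : D.abv x ≤ D.q ^ j := by
  rcases eq_or_ne x 0 with rfl | hx
  · rw [D.abv_zero]; exact (D.zq_pos j).le
  obtain ⟨n, hn⟩ := D.abv_discrete x hx
  rw [hn] at h ⊢
  rw [zpow_lt_zpow_iff_right₀ D.one_lt_q] at h
  rw [zpow_le_zpow_iff_right₀ D.one_lt_q]
  omega

theorem abv_ge_of_gt {x : F} {j : ℤ} (h : D.q ^ j < D.abv x) : D.q ^ (j + 1) ≤ D.abv x := by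
  have hx : x ≠ 0 := by
    rintro rfl
    rw [D.abv_zero] at h
    exact absurd h (not_lt.2 (D.zq_pos j).le)
  obtain ⟨n, hn⟩ := D.abv_discrete x hx
  rw [hn] at h ⊢
  rw [zpow_lt_zpow_iff_right₀ D.one_lt_q] at h
  rw [zpow_le_zpow_iff_right₀ D.one_lt_q]
  omega

end Basic

section Ball

/-- The closed ball of radius `q^j` around `0`. -/
def Ball (j : ℤ) : Set F := {x | D.abv x ≤ D.q ^ j}

theorem mem_Ball {j : ℤ} {x : F} : x ∈ D.Ball j ↔ D.abv x ≤ D.q ^ j := Iff.rfl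

theorem zero_mem_Ball (j : ℤ) : (0 : F) ∈ D.Ball j := by
  simp [mem_Ball, D.abv_zero, (D.zq_pos j).le]

theorem Ball_mono {j j' : ℤ} (h : j ≤ j') : D.Ball j ⊆ D.Ball j' := by
  intro x hx
  show D.abv x ≤ D.q ^ j'
  refine le_trans hx ?_
  rw [zpow_le_zpow_iff_right₀ D.one_lt_q]
  exact h

theorem add_mem_Ball {j : ℤ} {x y : F} (hx : x ∈ D.Ball j) (hy : y ∈ D.Ball j) :
    x + y ∈ D.Ball j := le_trans (D.abv_add x y) (max_le hx hy)

theorem neg_mem_Ball {j : ℤ} {x : F} (hx : x ∈ D.Ball j) : -x ∈ D.Ball j := by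
  rwa [mem_Ball, D.abv_neg]

theorem sub_mem_Ball {j : ℤ} {x y : F} (hx : x ∈ D.Ball j) (hy : y ∈ D.Ball j) :
    x - y ∈ D.Ball j := by
  rw [sub_eq_add_neg]; exact D.add_mem_Ball hx (D.neg_mem_Ball hy)

/-- Translating a ball by an element of itself gives back the ball. -/
theorem Ball_add_eq {j : ℤ} {d : F} (hd : d ∈ D.Ball j) :
    (fun z => d + z) '' D.Ball j = D.Ball j := by
  apply Subset.antisymm
  · rintro _ ⟨x, hx, rfl⟩
    exact D.add_mem_Ball hd hx
  · intro x hx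
    exact ⟨x - d, D.sub_mem_Ball hx hd, by ring⟩

theorem Ball_eq_image (j : ℤ) :
    D.Ball j = (fun z => (D.ϖ ^ (-j) : F) * z) '' (D.O : Set F) := by
  ext x
  simp only [mem_Ball, mem_image, SetLike.mem_coe, D.mem_O]
  constructor
  · intro hx
    refine ⟨D.ϖ ^ j * x, ?_, ?_⟩
    · rw [D.abv_mul, D.abv_pi_zpow]
      calc D.q ^ (-j) * D.abv x ≤ D.q ^ (-j) * D.q ^ j :=
            mul_le_mul_of_nonneg_left hx (D.zq_pos _).le
        _ = 1 := by rw [← zpow_add₀ D.q_ne_zero]; simp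
    · rw [← mul_assoc, ← zpow_add₀ D.ϖ_ne_zero]; simp
  · rintro ⟨w, hw, rfl⟩
    rw [D.abv_mul, D.abv_pi_zpow, neg_neg]
    calc D.q ^ j * D.abv w ≤ D.q ^ j * 1 := mul_le_mul_of_nonneg_left hw (D.zq_pos _).le
      _ = D.q ^ j := mul_one _

theorem mu_smul_image {a : F} (ha : a ≠ 0) (s : Set F) :
    D.μ ((fun z => a * z) '' s) = ENNReal.ofReal (D.abv a) * D.μ s := D.μ_smul a ha s

theorem mu_translate (a : F) (s : Set F) :
    D.μ ((fun z => a + z) '' s) = D.μ s := D.μ_add_invariant a s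

theorem mu_affine {r : F} (hr : r ≠ 0) (d : F) (s : Set F) :
    D.μ ((fun z => d + r * z) '' s) = ENNReal.ofReal (D.abv r) * D.μ s := by
  have : (fun z => d + r * z) '' s = (fun z => d + z) '' ((fun z => r * z) '' s) := by
    rw [Set.image_image]
  rw [this, D.mu_translate, D.mu_smul_image hr]

theorem mu_Ball (j : ℤ) : D.μ (D.Ball j) = ENNReal.ofReal (D.q ^ j) := by
  rw [D.Ball_eq_image j, D.mu_smul_image (D.pi_zpow_ne_zero _), D.μ_O, D.abv_pi_zpow, neg_neg,
    mul_one]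

theorem mu_Ball_ne_top (j : ℤ) : D.μ (D.Ball j) ≠ ⊤ := by
  rw [D.mu_Ball]; exact ENNReal.ofReal_ne_top

end Ball


section NullMeas

theorem iUnion_toMeasurable_Ball : ⋃ k : ℕ, toMeasurable D.μ (D.Ball k) = univ := by
  rw [Set.eq_univ_iff_forall]
  intro x
  rcases eq_or_ne x 0 with rfl | hx
  · exact Set.mem_iUnion.2 ⟨0, subset_toMeasurable _ _ (D.zero_mem_Ball 0)⟩
  obtain ⟨n, hn⟩ := D.abv_discrete x hx
  refine Set.mem_iUnion.2 ⟨n.toNat, subset_toMeasurable _ _ ?_⟩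
  rw [mem_Ball, hn, zpow_le_zpow_iff_right₀ D.one_lt_q]
  exact Int.self_le_toNat n

/-- Envelopes are minimal: any null-measurable set containing `s` contains an
envelope of `s` up to null sets. -/
theorem env_diff_null {s E A : Set F} (hsE : s ⊆ E) (hμE : D.μ E = D.μ s) (hfin : D.μ s ≠ ⊤)
    (hA : NullMeasurableSet A D.μ) (hsA : s ⊆ A) : D.μ (E \ A) = 0 := by
  have hsplit := measure_inter_add_diff₀ (μ := D.μ) E hA
  have h1 : D.μ s ≤ D.μ (E ∩ A) := measure_mono (Set.subset_inter hsE hsA)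
  have h2 : D.μ (E ∩ A) ≤ D.μ E := measure_mono Set.inter_subset_left
  rw [hμE] at h2
  have h3 : D.μ (E ∩ A) = D.μ s := le_antisymm h2 h1
  rw [h3, hμE] at hsplit
  exact (ENNReal.add_right_inj hfin).1 (by rw [hsplit, add_zero])

theorem nm_affine_of_finite {A : Set F} (hA : MeasurableSet A) (hfin : D.μ A ≠ ⊤)
    {r : F} (hr : r ≠ 0) (d : F) :
    NullMeasurableSet ((fun z => d + r * z) '' A) D.μ := by
  have hTinj : Function.Injective (fun z : F => d + r * z) := by
    intro a b hab
    simp only at hab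
    exact mul_left_cancel₀ hr (add_left_cancel hab)
  have hcomp1 : ∀ z : F, r⁻¹ * (-d + (d + r * z)) = z := by
    intro z; field_simp; ring
  have hcomp2 : ∀ w : F, d + r * (r⁻¹ * (-d + w)) = w := by
    intro w; field_simp; ring
  have hAA' : A ⊆ (fun w => r⁻¹ * (-d + w)) '' (toMeasurable D.μ ((fun z => d + r * z) '' A)) := by
    intro a ha
    exact ⟨d + r * a, subset_toMeasurable _ _ ⟨a, ha, rfl⟩, hcomp1 a⟩
  have hμE' : D.μ (toMeasurable D.μ ((fun z => d + r * z) '' A))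
      = ENNReal.ofReal (D.abv r) * D.μ A := by
    rw [measure_toMeasurable, D.mu_affine hr]
  have hμA' : D.μ ((fun w => r⁻¹ * (-d + w)) '' (toMeasurable D.μ ((fun z => d + r * z) '' A)))
      = D.μ A := by
    have himg : (fun w : F => r⁻¹ * (-d + w)) '' (toMeasurable D.μ ((fun z => d + r * z) '' A))
        = (fun w => r⁻¹ * w) '' ((fun w => -d + w) '' (toMeasurable D.μ ((fun z => d + r * z) '' A))) := by
      rw [Set.image_image]
    rw [himg, D.mu_smul_image (inv_ne_zero hr), D.mu_translate, hμE',
      ← mul_assoc, ← ENNReal.ofReal_mul (D.abv_nonneg _), ← D.abv_mul,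
      inv_mul_cancel₀ hr, D.abv_one, ENNReal.ofReal_one, one_mul]
  have hdiff : D.μ ((fun w => r⁻¹ * (-d + w)) ''
      (toMeasurable D.μ ((fun z => d + r * z) '' A)) \ A) = 0 := by
    have hsplit := measure_inter_add_diff₀ (μ := D.μ)
      ((fun w => r⁻¹ * (-d + w)) '' (toMeasurable D.μ ((fun z => d + r * z) '' A)))
      hA.nullMeasurableSet
    rw [Set.inter_eq_self_of_subset_right hAA', hμA'] at hsplit
    exact (ENNReal.add_right_inj hfin).1 (by rw [hsplit, add_zero])
  have hTA' : (fun z : F => d + r * z) '' ((fun w => r⁻¹ * (-d + w)) ''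
      (toMeasurable D.μ ((fun z => d + r * z) '' A)))
      = toMeasurable D.μ ((fun z => d + r * z) '' A) := by
    rw [Set.image_image]
    simp only [hcomp2, Set.image_id']
  have hEB : toMeasurable D.μ ((fun z => d + r * z) '' A) \ ((fun z => d + r * z) '' A)
      = (fun z : F => d + r * z) '' ((fun w => r⁻¹ * (-d + w)) ''
        (toMeasurable D.μ ((fun z => d + r * z) '' A)) \ A) := by
    rw [Set.image_diff hTinj, hTA']
  have hnull : D.μ (toMeasurable D.μ ((fun z => d + r * z) '' A)
      \ ((fun z => d + r * z) '' A)) = 0 := by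
    rw [hEB, D.mu_affine hr, hdiff, mul_zero]
  have hBE : (fun z : F => d + r * z) '' A ⊆ toMeasurable D.μ ((fun z => d + r * z) '' A) :=
    subset_toMeasurable _ _
  have hrepr : (fun z : F => d + r * z) '' A
      = toMeasurable D.μ ((fun z => d + r * z) '' A)
        \ (toMeasurable D.μ ((fun z => d + r * z) '' A) \ ((fun z => d + r * z) '' A)) :=
    (Set.diff_diff_cancel_left hBE).symm
  rw [hrepr]
  exact (measurableSet_toMeasurable _ _).nullMeasurableSet.diff
    (NullMeasurableSet.of_null hnull)

theorem nm_affine {A : Set F} (hA : NullMeasurableSet A D.μ) {r : F} (hr : r ≠ 0) (d : F) :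
    NullMeasurableSet ((fun z => d + r * z) '' A) D.μ := by
  obtain ⟨t, hts, htm, hteq⟩ := hA.exists_measurable_subset_ae_eq
  have hnull : D.μ (A \ t) = 0 := (ae_eq_set.mp hteq).2
  have hsplit : A = t ∪ (A \ t) := by
    rw [Set.union_diff_cancel hts]
  have himg : (fun z => d + r * z) '' A =
      ((fun z => d + r * z) '' t) ∪ ((fun z => d + r * z) '' (A \ t)) := by
    rw [← Set.image_union, ← hsplit]
  rw [himg]
  have h2 : D.μ ((fun z => d + r * z) '' (A \ t)) = 0 := by
    rw [D.mu_affine hr, hnull, mul_zero]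
  refine NullMeasurableSet.union ?_ (NullMeasurableSet.of_null h2)
  have hcover : t = ⋃ k : ℕ, t ∩ toMeasurable D.μ (D.Ball k) := by
    rw [← Set.inter_iUnion, D.iUnion_toMeasurable_Ball, Set.inter_univ]
  have himg2 : (fun z => d + r * z) '' t =
      ⋃ k : ℕ, (fun z => d + r * z) '' (t ∩ toMeasurable D.μ (D.Ball k)) := by
    conv_lhs => rw [hcover]
    rw [Set.image_iUnion]
  rw [himg2]
  refine NullMeasurableSet.iUnion fun k => ?_
  refine D.nm_affine_of_finite (htm.inter (measurableSet_toMeasurable _ _)) ?_ hr d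
  refine ne_top_of_le_ne_top ?_ (measure_mono Set.inter_subset_right)
  rw [measure_toMeasurable]
  exact D.mu_Ball_ne_top _

theorem nm_translate {A : Set F} (hA : NullMeasurableSet A D.μ) (d : F) :
    NullMeasurableSet ((fun z => d + z) '' A) D.μ := by
  have h := D.nm_affine hA one_ne_zero d
  simpa only [one_mul] using h

theorem nm_smul {A : Set F} (hA : NullMeasurableSet A D.μ) {r : F} (hr : r ≠ 0) :
    NullMeasurableSet ((fun z => r * z) '' A) D.μ := by
  have h := D.nm_affine hA hr 0
  simpa only [zero_add] using h

end NullMeas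

section Kc

theorem ψ_zero : D.ψ 0 = 1 := D.ψ_triv 0 (by rw [D.abv_zero]; norm_num)

theorem ψ_ne_zero (x : F) : D.ψ x ≠ 0 := by
  intro h
  have h2 := D.ψ_add x (-x)
  rw [add_neg_cancel, D.ψ_zero, h, zero_mul] at h2
  exact one_ne_zero h2

theorem ψ_neg (x : F) : D.ψ (-x) = (D.ψ x)⁻¹ := by
  have h2 := D.ψ_add x (-x)
  rw [add_neg_cancel, D.ψ_zero] at h2
  field_simp [D.ψ_ne_zero x]
  linear_combination -h2

/-- The kernel of `ψ`. -/
def K : Set F := D.ψ ⁻¹' {1}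

theorem measurableSet_K : MeasurableSet D.K := D.ψ_meas (measurableSet_singleton 1)

/-- The set `{x | ψ(cx) = 1}`, a "rescaled kernel". -/
def Kc (c : F) : Set F := {x | D.ψ (c * x) = 1}

theorem mem_Kc {c x : F} : x ∈ D.Kc c ↔ D.ψ (c * x) = 1 := Iff.rfl

theorem Kc_zero : D.Kc 0 = univ := by
  rw [Set.eq_univ_iff_forall]
  intro x
  show D.ψ (0 * x) = 1
  rw [zero_mul, D.ψ_zero]

theorem nm_Kc (c : F) : NullMeasurableSet (D.Kc c) D.μ := by
  rcases eq_or_ne c 0 with rfl | hc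
  · rw [D.Kc_zero]; exact MeasurableSet.univ.nullMeasurableSet
  have : D.Kc c = (fun z => c⁻¹ * z) '' D.K := by
    ext x
    constructor
    · intro hx
      exact ⟨c * x, hx, by field_simp⟩
    · rintro ⟨k, hk, rfl⟩
      show D.ψ (c * (c⁻¹ * k)) = 1
      rw [← mul_assoc, mul_inv_cancel₀ hc, one_mul]
      exact hk
  rw [this]
  exact D.nm_smul D.measurableSet_K.nullMeasurableSet (inv_ne_zero hc)

theorem sub_mem_Kc {c x y : F} (hx : x ∈ D.Kc c) (hy : y ∈ D.Kc c) : x - y ∈ D.Kc c := by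
  show D.ψ (c * (x - y)) = 1
  have : c * (x - y) = c * x + -(c * y) := by ring
  rw [this, D.ψ_add, D.ψ_neg, hx, hy]
  norm_num

theorem mem_Kc_of_abv {c x : F} (h : D.abv (c * x) ≤ 1) : x ∈ D.Kc c := D.ψ_triv _ h

theorem Ball_subset_Kc {c : F} {l j : ℤ} (hc : D.abv c ≤ D.q ^ l) (hlj : l + j ≤ 0) :
    D.Ball j ⊆ D.Kc c := by
  intro x hx
  apply D.mem_Kc_of_abv
  rw [D.abv_mul]
  calc D.abv c * D.abv x ≤ D.q ^ l * D.q ^ j := by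
        apply mul_le_mul hc hx (D.abv_nonneg x) (D.zq_pos l).le
    _ = D.q ^ (l + j) := (zpow_add₀ D.q_ne_zero l j).symm
    _ ≤ D.q ^ (0 : ℤ) := by rw [zpow_le_zpow_iff_right₀ D.one_lt_q]; exact hlj
    _ = 1 := zpow_zero _

/-- Detector: for `z` on the shell of radius `q^j` there is a character coefficient
`c` with `|c| ≤ q^(1-j)` such that `ψ(c ⬝)` is `≠ 1` on the whole cell `z + Ball (j-1)`. -/
theorem detector {z : F} {j : ℤ} (hz : D.abv z = D.q ^ j) :
    ∃ c : F, c ≠ 0 ∧ D.abv c ≤ D.q ^ (1 - j) ∧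
      ∀ d : F, D.abv d ≤ D.q ^ (j - 1) → D.ψ (c * (z + d)) ≠ 1 := by
  obtain ⟨x₀, hx₀q, hx₀⟩ := D.ψ_nontriv
  have hx₀0 : x₀ ≠ 0 := by rintro rfl; exact hx₀ D.ψ_zero
  have hz0 : z ≠ 0 := by
    rintro rfl
    rw [D.abv_zero] at hz
    exact (D.zq_pos j).ne' hz.symm
  refine ⟨x₀ * z⁻¹, mul_ne_zero hx₀0 (inv_ne_zero hz0), ?_, ?_⟩
  · rw [D.abv_mul, D.abv_inv hz0, hz]
    calc D.abv x₀ * (D.q ^ j)⁻¹ ≤ D.q * (D.q ^ j)⁻¹ := by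
          apply mul_le_mul_of_nonneg_right hx₀q (inv_nonneg.mpr (D.zq_pos j).le)
      _ = D.q ^ (1 - j) := by
          rw [sub_eq_add_neg, zpow_add₀ D.q_ne_zero, zpow_one, zpow_neg]
  · intro d hd
    have harg : x₀ * z⁻¹ * (z + d) = x₀ + x₀ * z⁻¹ * d := by
      field_simp
    rw [harg, D.ψ_add]
    have htriv : D.ψ (x₀ * z⁻¹ * d) = 1 := by
      apply D.ψ_triv
      rw [D.abv_mul, D.abv_mul, D.abv_inv hz0, hz]
      have h1 : D.abv x₀ * (D.q ^ j)⁻¹ ≤ D.q * (D.q ^ j)⁻¹ :=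
        mul_le_mul_of_nonneg_right hx₀q (inv_nonneg.mpr (D.zq_pos j).le)
      calc D.abv x₀ * (D.q ^ j)⁻¹ * D.abv d ≤ D.q * (D.q ^ j)⁻¹ * D.q ^ (j - 1) :=
            mul_le_mul h1 hd (D.abv_nonneg d)
              (mul_nonneg D.q_pos.le (inv_nonneg.mpr (D.zq_pos j).le))
        _ = 1 := by
            have hqj : D.q ^ j ≠ 0 := (D.zq_pos j).ne'
            rw [zpow_sub₀ D.q_ne_zero, zpow_one]
            field_simp
            exact div_self D.q_ne_zero
    rw [htriv, mul_one]
    exact hx₀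

end Kc


section Cosets

theorem add_mem_Kc {c x y : F} (hx : x ∈ D.Kc c) (hy : y ∈ D.Kc c) : x + y ∈ D.Kc c := by
  show D.ψ (c * (x + y)) = 1
  rw [mul_add, D.ψ_add, hx, hy, mul_one]

theorem zero_mem_Kc (c : F) : (0 : F) ∈ D.Kc c := by
  apply D.mem_Kc_of_abv
  rw [mul_zero, D.abv_zero]
  norm_num

theorem exists_Ball_subset_Kc {c : F} (hc : c ≠ 0) : ∃ j : ℤ, D.Ball j ⊆ D.Kc c := by
  obtain ⟨n, hn⟩ := D.abv_discrete c hc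
  exact ⟨-n, D.Ball_subset_Kc hn.le (by omega)⟩

theorem coset_eq_of_inter {c x y : F}
    (h : (((fun z => x + z) '' D.Kc c) ∩ ((fun z => y + z) '' D.Kc c)).Nonempty) :
    (fun z => x + z) '' D.Kc c = (fun z => y + z) '' D.Kc c := by
  obtain ⟨z, ⟨k₁, hk₁, hz₁⟩, ⟨k₂, hk₂, hz₂⟩⟩ := h
  simp only at hz₁ hz₂
  have key : ∀ w : F, w ∈ D.Kc c → y + (k₂ - k₁ + w) = x + w := by
    intro w _
    have : y + k₂ = x + k₁ := by rw [hz₁, hz₂]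
    linear_combination this
  ext w
  constructor
  · rintro ⟨k, hk, rfl⟩
    exact ⟨k₂ - k₁ + k, D.add_mem_Kc (D.sub_mem_Kc hk₂ hk₁) hk, key k hk⟩
  · rintro ⟨k, hk, rfl⟩
    refine ⟨k₁ - k₂ + k, D.add_mem_Kc (D.sub_mem_Kc hk₁ hk₂) hk, ?_⟩
    have : x + k₁ = y + k₂ := by rw [hz₁, hz₂]
    linear_combination this

/-- A pairwise disjoint family of null-measurable sets of positive measure is countable
(`F` is σ-finite thanks to the measure of balls). -/
theorem countable_of_disjoint_pos {S : Set (Set F)}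
    (hd : S.PairwiseDisjoint id)
    (hnm : ∀ A ∈ S, NullMeasurableSet A D.μ)
    (hpos : ∀ A ∈ S, 0 < D.μ A) : S.Countable := by
  have hfin : ∀ k j : ℕ,
      {A ∈ S | ((j : ENNReal))⁻¹ < D.μ (A ∩ toMeasurable D.μ (D.Ball k))}.Finite := by
    intro k j
    by_contra hinf
    have hinf' : {A ∈ S | ((j : ENNReal))⁻¹ < D.μ (A ∩ toMeasurable D.μ (D.Ball k))}.Infinite :=
      hinf
    set e := hinf'.natEmbedding with he
    have hsub : ∀ n : ℕ, (e n : Set F) ∈ S := fun n => (e n).2.1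
    have hlt : ∀ n : ℕ, ((j : ENNReal))⁻¹ < D.μ ((e n : Set F) ∩ toMeasurable D.μ (D.Ball k)) :=
      fun n => (e n).2.2
    have hdisj : Pairwise (Function.onFun (AEDisjoint D.μ)
        fun n : ℕ => (e n : Set F) ∩ toMeasurable D.μ (D.Ball k)) := by
      intro a b hab
      have hne : (e a : Set F) ≠ (e b : Set F) := by
        intro hcontr
        exact hab (e.injective (Subtype.ext hcontr))
      have := hd (hsub a) (hsub b) hne
      exact Disjoint.aedisjoint
        (this.mono Set.inter_subset_left Set.inter_subset_left)
    have hnm' : ∀ n : ℕ, NullMeasurableSet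
        ((e n : Set F) ∩ toMeasurable D.μ (D.Ball k)) D.μ :=
      fun n => (hnm _ (hsub n)).inter (measurableSet_toMeasurable _ _).nullMeasurableSet
    have hsum := measure_iUnion₀ (μ := D.μ) hdisj hnm'
    have hle : D.μ (⋃ n : ℕ, (e n : Set F) ∩ toMeasurable D.μ (D.Ball k))
        ≤ D.μ (toMeasurable D.μ (D.Ball k)) :=
      measure_mono (Set.iUnion_subset fun n => Set.inter_subset_right)
    rw [hsum] at hle
    have htop : (⊤ : ENNReal) ≤ D.μ (toMeasurable D.μ (D.Ball k)) := by
      refine le_trans ?_ hle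
      have hconst : ∀ n : ℕ, ((j : ENNReal))⁻¹
          ≤ D.μ ((e n : Set F) ∩ toMeasurable D.μ (D.Ball k)) := fun n => (hlt n).le
      have h1 : (⊤ : ENNReal) = ∑' _ : ℕ, ((j : ENNReal))⁻¹ :=
        (ENNReal.tsum_const_eq_top_of_ne_zero
          (ENNReal.inv_ne_zero.2 (ENNReal.natCast_ne_top j))).symm
      rw [h1]
      exact ENNReal.tsum_le_tsum hconst
    rw [measure_toMeasurable] at htop
    exact (D.mu_Ball_ne_top k) (top_le_iff.1 htop)
  have hcover : S ⊆ ⋃ k : ℕ, ⋃ j : ℕ,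
      {A ∈ S | ((j : ENNReal))⁻¹ < D.μ (A ∩ toMeasurable D.μ (D.Ball k))} := by
    intro A hA
    have hposA := hpos A hA
    have hcov : A = ⋃ k : ℕ, A ∩ toMeasurable D.μ (D.Ball k) := by
      rw [← Set.inter_iUnion, D.iUnion_toMeasurable_Ball, Set.inter_univ]
    have hex : ∃ k : ℕ, 0 < D.μ (A ∩ toMeasurable D.μ (D.Ball k)) := by
      by_contra hno
      push_neg at hno
      have hzero : ∀ k : ℕ, D.μ (A ∩ toMeasurable D.μ (D.Ball k)) = 0 :=
        fun k => le_antisymm (hno k) zero_le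
      have : D.μ A = 0 := by
        conv_lhs => rw [hcov]
        exact measure_iUnion_null hzero
      rw [this] at hposA
      exact lt_irrefl _ hposA
    obtain ⟨k, hk⟩ := hex
    obtain ⟨j, hj⟩ := ENNReal.exists_inv_nat_lt hk.ne'
    exact Set.mem_iUnion.2 ⟨k, Set.mem_iUnion.2 ⟨j, hA, hj⟩⟩
  exact Set.Countable.mono hcover
    (Set.countable_iUnion fun k => Set.countable_iUnion fun j => (hfin k j).countable)

/-- Enumeration of the (countably many) cosets of a rescaled kernel. -/
theorem coset_enum {c : F} (hc : c ≠ 0) :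
    ∃ g : ℕ → F, (⋃ i, (fun z => g i + z) '' D.Kc c) = univ := by
  have hself : ∀ x : F, x ∈ (fun z => x + z) '' D.Kc c :=
    fun x => ⟨0, D.zero_mem_Kc c, by simp⟩
  have hdisj : (Set.range (fun x : F => (fun z => x + z) '' D.Kc c)).PairwiseDisjoint id := by
    rintro _ ⟨x, rfl⟩ _ ⟨y, rfl⟩ hne
    rw [Function.onFun, Set.disjoint_left]
    intro a hax hay
    exact hne (D.coset_eq_of_inter ⟨a, hax, hay⟩)
  have hnm : ∀ A ∈ Set.range (fun x : F => (fun z => x + z) '' D.Kc c),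
      NullMeasurableSet A D.μ := by
    rintro _ ⟨x, rfl⟩
    exact D.nm_translate (D.nm_Kc c) x
  have hpos : ∀ A ∈ Set.range (fun x : F => (fun z => x + z) '' D.Kc c), 0 < D.μ A := by
    rintro _ ⟨x, rfl⟩
    obtain ⟨j, hj⟩ := D.exists_Ball_subset_Kc hc
    calc (0 : ENNReal) < ENNReal.ofReal (D.q ^ j) := by
          rw [ENNReal.ofReal_pos]; exact D.zq_pos j
      _ = D.μ ((fun z => x + z) '' D.Ball j) := by rw [D.mu_translate, D.mu_Ball]
      _ ≤ D.μ ((fun z => x + z) '' D.Kc c) :=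
          measure_mono (Set.image_mono hj)
  have hcnt := D.countable_of_disjoint_pos hdisj hnm hpos
  have hne : (Set.range (fun x : F => (fun z => x + z) '' D.Kc c)).Nonempty :=
    ⟨_, ⟨0, rfl⟩⟩
  obtain ⟨f, hf⟩ := hcnt.exists_eq_range hne
  have hchoice : ∀ i : ℕ, ∃ x : F, f i = (fun z => x + z) '' D.Kc c := by
    intro i
    have : f i ∈ Set.range (fun x : F => (fun z => x + z) '' D.Kc c) := by
      rw [hf]; exact Set.mem_range_self i
    obtain ⟨x, hx⟩ := this
    exact ⟨x, hx.symm⟩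
  choose g hg using hchoice
  refine ⟨g, ?_⟩
  rw [Set.eq_univ_iff_forall]
  intro x
  have : ((fun z => x + z) '' D.Kc c) ∈ Set.range (fun x : F => (fun z => x + z) '' D.Kc c) :=
    ⟨x, rfl⟩
  rw [hf] at this
  obtain ⟨i, hi⟩ := this
  refine Set.mem_iUnion.2 ⟨i, ?_⟩
  rw [← hg i, hi]
  exact hself x

end Cosets


section Shell

/-- Key lemma: if `E₀` is a.e. contained in every rescaled kernel `Kc c` with
`|c| ≤ q^l`, then `E₀` is null on every shell `{|x| = q^j}` with `j ≥ 1 - l`. -/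
theorem shell_null {E₀ : Set F} (hE₀ : NullMeasurableSet E₀ D.μ) {l j : ℤ}
    (hK : ∀ c : F, c ≠ 0 → D.abv c ≤ D.q ^ l → D.μ (E₀ \ D.Kc c) = 0)
    (hj : 1 - l ≤ j) :
    D.μ (E₀ ∩ {x | D.abv x = D.q ^ j}) = 0 := by
  classical
  by_contra hη
  -- any cell centered at a shell point meets E₀ in a null set
  have cell_null : ∀ z : F, D.abv z = D.q ^ j →
      D.μ (E₀ ∩ (fun w => z + w) '' D.Ball (j - 1)) = 0 := by
    intro z hz
    obtain ⟨c, hc0, hcle, hckill⟩ := D.detector hz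
    have hcle' : D.abv c ≤ D.q ^ l := by
      refine le_trans hcle ?_
      rw [zpow_le_zpow_iff_right₀ D.one_lt_q]
      omega
    refine measure_mono_null ?_ (hK c hc0 hcle')
    rintro w ⟨hw, ⟨d, hd, rfl⟩⟩
    exact ⟨hw, fun hKc => hckill d hd hKc⟩
  by_cases hcov : ∃ T : Finset F, (∀ z ∈ T, D.abv z = D.q ^ j) ∧
      (E₀ ∩ {x | D.abv x = D.q ^ j}) ⊆ ⋃ z ∈ T, (fun w => z + w) '' D.Ball (j - 1)
  · -- finitely many cells cover the shell part: it is null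
    obtain ⟨T, hTz, hTcov⟩ := hcov
    apply hη
    have h1 : D.μ (E₀ ∩ {x | D.abv x = D.q ^ j})
        ≤ D.μ (⋃ z ∈ T, E₀ ∩ ((fun w => z + w) '' D.Ball (j - 1))) := by
      apply measure_mono
      intro x hx
      obtain ⟨z, hzT, hxz⟩ := Set.mem_iUnion₂.1 (hTcov hx)
      exact Set.mem_iUnion₂.2 ⟨z, hzT, hx.1, hxz⟩
    have h2 : D.μ (⋃ z ∈ T, E₀ ∩ ((fun w => z + w) '' D.Ball (j - 1)))
        ≤ ∑ z ∈ T, D.μ (E₀ ∩ ((fun w => z + w) '' D.Ball (j - 1))) :=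
      measure_biUnion_finset_le T _
    have h3 : ∑ z ∈ T, D.μ (E₀ ∩ ((fun w => z + w) '' D.Ball (j - 1))) = 0 :=
      Finset.sum_eq_zero fun z hz => cell_null z (hTz z hz)
    exact le_antisymm (h1.trans (h2.trans_eq h3)) zero_le
  · -- otherwise we find arbitrarily many shell points in distinct cells
    push_neg at hcov
    have hch' : ∀ T : Finset F, ∃ x : F, (∀ z ∈ T, D.abv z = D.q ^ j) →
        (x ∈ E₀ ∩ {x | D.abv x = D.q ^ j} ∧
          x ∉ ⋃ z ∈ T, (fun w => z + w) '' D.Ball (j - 1)) := by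
      intro T
      by_cases hT : ∀ z ∈ T, D.abv z = D.q ^ j
      · obtain ⟨x, hx1, hx2⟩ := Set.not_subset.1 (hcov T hT)
        exact ⟨x, fun _ => ⟨hx1, hx2⟩⟩
      · exact ⟨0, fun h => absurd h hT⟩
    choose pick hpick using hch'
    set Y : ℕ → Finset F := fun n => Nat.rec ∅ (fun _ T => insert (pick T) T) n with hY
    have hY0 : Y 0 = ∅ := rfl
    have hYsucc : ∀ n, Y (n + 1) = insert (pick (Y n)) (Y n) := fun n => rfl
    have hgood : ∀ n, ∀ z ∈ Y n, D.abv z = D.q ^ j := by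
      intro n
      induction n with
      | zero => intro z hz; simp [hY0] at hz
      | succ k ih =>
          intro z hz
          rw [hYsucc, Finset.mem_insert] at hz
          rcases hz with rfl | hz
          · exact ((hpick (Y k) ih).1).2
          · exact ih z hz
    set y : ℕ → F := fun n => pick (Y n) with hy
    have hyX : ∀ n, y n ∈ E₀ ∩ {x | D.abv x = D.q ^ j} := fun n => (hpick (Y n) (hgood n)).1
    have hynotin : ∀ n, y n ∉ ⋃ z ∈ Y n, (fun w => z + w) '' D.Ball (j - 1) :=
      fun n => (hpick (Y n) (hgood n)).2
    have hmono : ∀ i n, i ≤ n → Y i ⊆ Y n := by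
      intro i n hin
      induction n with
      | zero => rw [Nat.le_zero] at hin; subst hin; exact subset_rfl
      | succ k ih =>
          rcases eq_or_lt_of_le hin with h | h
          · subst h; exact subset_rfl
          · refine (ih (Nat.lt_succ_iff.1 h)).trans ?_
            rw [hYsucc]
            exact Finset.subset_insert _ _
    have hyY : ∀ i, y i ∈ Y (i + 1) := by
      intro i
      rw [hYsucc]
      exact Finset.mem_insert_self _ _
    have hsep : ∀ i n, i < n → D.abv (y n - y i) = D.q ^ j := by
      intro i n hin
      have hyiYn : y i ∈ Y n := hmono (i + 1) n hin (hyY i)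
      have hnot : y n ∉ (fun w => y i + w) '' D.Ball (j - 1) := by
        intro hmem
        exact hynotin n (Set.mem_iUnion₂.2 ⟨y i, hyiYn, hmem⟩)
      have hgt : D.q ^ (j - 1) < D.abv (y n - y i) := by
        by_contra hle
        push_neg at hle
        exact hnot ⟨y n - y i, hle, by simp⟩
      have hge : D.q ^ j ≤ D.abv (y n - y i) := by
        have := D.abv_ge_of_gt hgt
        rwa [sub_add_cancel] at this
      have hle2 : D.abv (y n - y i) ≤ D.q ^ j := by
        have h1 := D.abv_sub_le (y n) (y i)
        rw [(hyX n).2, (hyX i).2] at h1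
        simpa using h1
      exact le_antisymm hle2 hge
    have hsep' : ∀ i n, i ≠ n → D.abv (y n - y i) = D.q ^ j := by
      intro i n hin
      rcases lt_or_gt_of_ne hin with h | h
      · exact hsep i n h
      · rw [← D.abv_neg, neg_sub]
        exact hsep n i h
    -- the transported envelope pieces
    set X := E₀ ∩ {x | D.abv x = D.q ^ j} with hX
    set V := toMeasurable D.μ (D.Ball j) with hV
    set W := toMeasurable D.μ X ∩ (E₀ ∩ V) with hW
    have hXW : X ⊆ W := by
      intro x hx
      exact ⟨subset_toMeasurable _ _ hx, hx.1, subset_toMeasurable _ _ hx.2.le⟩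
    have hWnm : NullMeasurableSet W D.μ :=
      ((measurableSet_toMeasurable _ _).nullMeasurableSet).inter
        (hE₀.inter (measurableSet_toMeasurable _ _).nullMeasurableSet)
    have hμW : D.μ W = D.μ X := by
      refine le_antisymm ?_ (measure_mono hXW)
      calc D.μ W ≤ D.μ (toMeasurable D.μ X) := measure_mono Set.inter_subset_left
        _ = D.μ X := measure_toMeasurable X
    have hWKc : ∀ c : F, c ≠ 0 → D.abv c ≤ D.q ^ l → D.μ (W \ D.Kc c) = 0 := by
      intro c hc0 hcle
      refine measure_mono_null ?_ (hK c hc0 hcle)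
      exact Set.diff_subset_diff_left (fun x hx => hx.2.1)
    have hWV : W ⊆ V := fun x hx => hx.2.2
    have hdmem : ∀ i : ℕ, y i - y 0 ∈ D.Ball j := by
      intro i
      rcases Nat.eq_zero_or_pos i with rfl | hi
      · simpa [mem_Ball, D.abv_zero] using (D.zq_pos j).le
      · rw [mem_Ball, hsep' 0 i (Nat.pos_iff_ne_zero.mp hi).symm]
    -- each translate is a.e. inside V
    have hHV : ∀ i : ℕ, D.μ ((fun w => (y i - y 0) + w) '' W \ V) = 0 := by
      intro i
      have hsub : (fun w => (y i - y 0) + w) '' W \ V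
          ⊆ ((fun w => (y i - y 0) + w) '' V) \ V :=
        Set.diff_subset_diff_left (Set.image_mono hWV)
      refine measure_mono_null hsub ?_
      refine D.env_diff_null (s := D.Ball j) ?_ ?_ (D.mu_Ball_ne_top j)
        (measurableSet_toMeasurable _ _).nullMeasurableSet (subset_toMeasurable _ _)
      · intro x hx
        rw [← D.Ball_add_eq (hdmem i)] at hx
        exact Set.image_mono (subset_toMeasurable _ _) hx
      · rw [D.mu_translate, hV, measure_toMeasurable]
    -- translates are pairwise a.e. disjoint
    have hHdisj : ∀ i k : ℕ, i ≠ k →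
        D.μ (((fun w => (y i - y 0) + w) '' W) ∩ ((fun w => (y k - y 0) + w) '' W)) = 0 := by
      intro i k hik
      obtain ⟨c, hc0, hcle, hckill⟩ := D.detector (hsep' k i hik.symm)
      have hcle' : D.abv c ≤ D.q ^ l := by
        refine le_trans hcle ?_
        rw [zpow_le_zpow_iff_right₀ D.one_lt_q]
        omega
      have hznotKc : y i - y k ∉ D.Kc c := by
        intro hmem
        refine hckill 0 ?_ ?_
        · rw [D.abv_zero]; exact (D.zq_pos _).le
        · rw [add_zero]; exact hmem
      have hincl : ((fun w => (y i - y 0) + w) '' W) ∩ ((fun w => (y k - y 0) + w) '' W)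
          ⊆ ((fun w => (y i - y 0) + w) '' (W \ D.Kc c))
            ∪ ((fun w => (y k - y 0) + w) '' (W \ D.Kc c)) := by
        rintro v ⟨⟨w₁, hw₁, hv₁⟩, ⟨w₂, hw₂, hv₂⟩⟩
        simp only at hv₁ hv₂
        by_cases hw₁K : w₁ ∈ D.Kc c
        · by_cases hw₂K : w₂ ∈ D.Kc c
          · exfalso
            apply hznotKc
            have hdiff : y i - y k = w₂ - w₁ := by
              have : (y i - y 0) + w₁ = (y k - y 0) + w₂ := by rw [hv₁, hv₂]
              linear_combination this
            rw [hdiff]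
            exact D.sub_mem_Kc hw₂K hw₁K
          · exact Or.inr ⟨w₂, ⟨hw₂, hw₂K⟩, hv₂⟩
        · exact Or.inl ⟨w₁, ⟨hw₁, hw₁K⟩, hv₁⟩
      refine measure_mono_null hincl ?_
      refine measure_union_null ?_ ?_ <;>
        · rw [D.mu_translate]
          exact hWKc c hc0 hcle'
    -- counting: N * μ X ≤ μ (Ball j) for every N
    have hcount : ∀ N : ℕ, (N : ENNReal) * D.μ X ≤ ENNReal.ofReal (D.q ^ j) := by
      intro N
      have hHmeas : ∀ i ∈ Finset.range N,
          NullMeasurableSet (((fun w => (y i - y 0) + w) '' W) ∩ V) D.μ :=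
        fun i _ => (D.nm_translate hWnm _).inter
          (measurableSet_toMeasurable _ _).nullMeasurableSet
      have hHdisj' : Set.Pairwise ↑(Finset.range N)
          (Function.onFun (AEDisjoint D.μ) fun i => ((fun w => (y i - y 0) + w) '' W) ∩ V) := by
        intro i _ k _ hik
        exact measure_mono_null
          (Set.inter_subset_inter Set.inter_subset_left Set.inter_subset_left)
          (hHdisj i k hik)
      have hsum := measure_biUnion_finset₀ (μ := D.μ) hHdisj' hHmeas
      have hle : D.μ (⋃ i ∈ Finset.range N, (((fun w => (y i - y 0) + w) '' W) ∩ V))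
          ≤ D.μ V := measure_mono (Set.iUnion₂_subset fun i _ => Set.inter_subset_right)
      rw [hsum] at hle
      have hterm : ∀ i : ℕ, D.μ (((fun w => (y i - y 0) + w) '' W) ∩ V) = D.μ X := by
        intro i
        refine le_antisymm ?_ ?_
        · calc D.μ (((fun w => (y i - y 0) + w) '' W) ∩ V)
              ≤ D.μ ((fun w => (y i - y 0) + w) '' W) := measure_mono Set.inter_subset_left
            _ = D.μ W := D.mu_translate _ _
            _ = D.μ X := hμW
        · have hsplit : D.μ ((fun w => (y i - y 0) + w) '' W)
              ≤ D.μ (((fun w => (y i - y 0) + w) '' W) ∩ V)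
                + D.μ (((fun w => (y i - y 0) + w) '' W) \ V) :=
            measure_le_inter_add_diff _ _ _
          rw [hHV i, add_zero, D.mu_translate, hμW] at hsplit
          exact hsplit
      have hsum' : ∑ i ∈ Finset.range N, D.μ (((fun w => (y i - y 0) + w) '' W) ∩ V)
          = (N : ENNReal) * D.μ X := by
        rw [Finset.sum_congr rfl fun i _ => hterm i, Finset.sum_const, Finset.card_range,
          nsmul_eq_mul]
      rw [hsum'] at hle
      calc (N : ENNReal) * D.μ X ≤ D.μ V := hle
        _ = ENNReal.ofReal (D.q ^ j) := by rw [hV, measure_toMeasurable, D.mu_Ball]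
    obtain ⟨N, hN⟩ := ENNReal.exists_nat_mul_gt hη ENNReal.ofReal_ne_top
    exact absurd (hcount N) (not_le.2 hN)


end Shell


section Integral

/-- Translating by a ball element does not change trace measures on an envelope of the ball. -/
theorem trace_translate {E : Set F} {jE : ℤ} (hEnm : NullMeasurableSet E D.μ)
    (hsE : D.Ball jE ⊆ E) (hμE : D.μ E = D.μ (D.Ball jE)) {a : F} (ha : a ∈ D.Ball jE)
    (t : Set F) :
    D.μ ((fun z => a + z) '' t ∩ E) = D.μ (t ∩ E) := by
  have hball : ∀ b : F, b ∈ D.Ball jE → D.Ball jE ⊆ (fun z => b + z) '' E := by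
    intro b hb x hx
    rw [← D.Ball_add_eq hb] at hx
    exact Set.image_mono hsE hx
  have hfin := D.mu_Ball_ne_top jE
  have hdiff1 : ∀ b : F, b ∈ D.Ball jE → D.μ (E \ (fun z => b + z) '' E) = 0 := by
    intro b hb
    exact D.env_diff_null hsE hμE hfin (D.nm_translate hEnm b) (hball b hb)
  have key : ∀ b : F, b ∈ D.Ball jE → ∀ u : Set F,
      D.μ ((fun z => b + z) '' u ∩ E) ≤ D.μ (u ∩ E) := by
    intro b hb u
    have hsub : (fun z => b + z) '' u ∩ E
        ⊆ ((fun z => b + z) '' u ∩ (fun z => b + z) '' E) ∪ (E \ (fun z => b + z) '' E) := by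
      intro x hx
      by_cases hxE : x ∈ (fun z => b + z) '' E
      · exact Or.inl ⟨hx.1, hxE⟩
      · exact Or.inr ⟨hx.2, hxE⟩
    calc D.μ ((fun z => b + z) '' u ∩ E)
        ≤ D.μ ((fun z => b + z) '' u ∩ (fun z => b + z) '' E)
            + D.μ (E \ (fun z => b + z) '' E) :=
          le_trans (measure_mono hsub) (measure_union_le _ _)
      _ = D.μ ((fun z => b + z) '' (u ∩ E)) := by
          rw [hdiff1 b hb, add_zero, Set.image_inter (add_right_injective b)]
      _ = D.μ (u ∩ E) := D.mu_translate _ _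
  refine le_antisymm (key a ha t) ?_
  have h2 := key (-a) (D.neg_mem_Ball ha) ((fun z => a + z) '' t)
  have himg : (fun z => (-a) + z) '' ((fun z => a + z) '' t) = t := by
    rw [Set.image_image]
    simp
  rw [himg] at h2
  exact h2

/-- If the character `ψ(c⬝)` is trivial on the ball, the integral over an envelope of the
ball is its volume. -/
theorem integral_psi_one {E : Set F} {jE : ℤ} (hEm : MeasurableSet E)
    (hsE : D.Ball jE ⊆ E) (hμE : D.μ E = D.μ (D.Ball jE))
    {c : F} (hsub : D.Ball jE ⊆ D.Kc c) :
    ∫ x in E, D.ψ (c * x) ∂D.μ = ((D.μ E).toReal : ℂ) := by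
  have hfin : D.μ (D.Ball jE) ≠ ⊤ := D.mu_Ball_ne_top jE
  have hnull : D.μ.restrict E {x | ¬ D.ψ (c * x) = 1} = 0 := by
    rw [Measure.restrict_apply' hEm]
    refine measure_mono_null ?_ (D.env_diff_null hsE hμE hfin (D.nm_Kc c) hsub)
    rintro x ⟨hx1, hx2⟩
    exact ⟨hx2, hx1⟩
  have hae : (fun x => D.ψ (c * x)) =ᵐ[D.μ.restrict E] fun _ => (1 : ℂ) := by
    rw [Filter.EventuallyEq, ae_iff]
    exact hnull
  rw [integral_congr_ae hae, integral_const, measureReal_def, Measure.restrict_apply_univ]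
  rw [Complex.real_smul, mul_one]

/-- If the character `ψ(c⬝)` is nontrivial at some ball element, the integral over an
envelope of the ball vanishes. -/
theorem integral_psi_zero {E : Set F} {jE : ℤ} (hEm : MeasurableSet E)
    (hsE : D.Ball jE ⊆ E) (hμE : D.μ E = D.μ (D.Ball jE))
    {c : F} (hc0 : c ≠ 0) {a : F} (ha : a ∈ D.Ball jE) (hψa : D.ψ (c * a) ≠ 1) :
    ∫ x in E, D.ψ (c * x) ∂D.μ = 0 := by
  by_cases hint : Integrable (fun x => D.ψ (c * x)) (D.μ.restrict E)
  swap
  · exact integral_undef hint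
  obtain ⟨g, hg⟩ := D.coset_enum hc0
  have hAsub : ∀ i, disjointed (fun i => (fun z => g i + z) '' D.Kc c) i
      ⊆ (fun z => g i + z) '' D.Kc c := disjointed_subset _
  have hAdisj : Pairwise (Function.onFun Disjoint (disjointed (fun i => (fun z => g i + z) '' D.Kc c))) :=
    disjoint_disjointed _
  have hAnm : ∀ i, NullMeasurableSet
      (disjointed (fun i => (fun z => g i + z) '' D.Kc c) i) D.μ :=
    NullMeasurableSet.disjointed (fun i => D.nm_translate (D.nm_Kc c) (g i))
  have hAU : ⋃ i, disjointed (fun i => (fun z => g i + z) '' D.Kc c) i = univ := by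
    rw [iUnion_disjointed, hg]
  have hval : ∀ i, ∀ x ∈ disjointed (fun i => (fun z => g i + z) '' D.Kc c) i,
      D.ψ (c * x) = D.ψ (c * g i) := by
    intro i x hx
    obtain ⟨k, hk, rfl⟩ := hAsub i hx
    have hk' : D.ψ (c * k) = 1 := hk
    show D.ψ (c * (g i + k)) = _
    rw [mul_add, D.ψ_add, hk', mul_one]
  have hresAC : D.μ.restrict E ≪ D.μ :=
    Measure.absolutelyContinuous_of_le Measure.restrict_le_self
  have hAnmν : ∀ i, NullMeasurableSet
      (disjointed (fun i => (fun z => g i + z) '' D.Kc c) i) (D.μ.restrict E) :=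
    fun i => (hAnm i).mono_ac hresAC
  have hSval : ∫ x, D.ψ (c * x) ∂(D.μ.restrict E)
      = ∑' i, ((D.μ.restrict E) (disjointed (fun i => (fun z => g i + z) '' D.Kc c) i)).toReal
          • D.ψ (c * g i) := by
    rw [← setIntegral_univ, ← hAU,
      integral_iUnion_ae hAnmν (fun i j hij => ((hAdisj hij).aedisjoint))
        (by rw [hAU, IntegrableOn, Measure.restrict_univ]; exact hint)]
    refine tsum_congr fun i => ?_
    rw [setIntegral_congr_ae₀ (hAnmν i)
      (Filter.Eventually.of_forall (fun x hx => hval i x hx)), setIntegral_const, measureReal_def]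
  have hBval : ∀ i, ∀ x ∈ (fun z => (-a) + z) ''
      disjointed (fun i => (fun z => g i + z) '' D.Kc c) i,
      D.ψ (c * (a + x)) = D.ψ (c * g i) := by
    rintro i x ⟨w, hw, rfl⟩
    simp only
    rw [show a + ((-a) + w) = w by ring]
    exact hval i w hw
  have hBnm : ∀ i, NullMeasurableSet ((fun z => (-a) + z) ''
      disjointed (fun i => (fun z => g i + z) '' D.Kc c) i) (D.μ.restrict E) :=
    fun i => (D.nm_translate (hAnm i) _).mono_ac hresAC
  have hBdisj : Pairwise (Function.onFun Disjoint fun i => (fun z => (-a) + z) ''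
      disjointed (fun i => (fun z => g i + z) '' D.Kc c) i) := by
    intro i j hij
    exact (Set.disjoint_image_iff (add_right_injective (-a))).2 (hAdisj hij)
  have hBU : ⋃ i, (fun z => (-a) + z) ''
      disjointed (fun i => (fun z => g i + z) '' D.Kc c) i = univ := by
    rw [← Set.image_iUnion, hAU, Set.image_univ, Set.range_eq_univ]
    intro x
    exact ⟨a + x, by ring⟩
  have heq : (fun x => D.ψ (c * (a + x))) = fun x => D.ψ (c * a) * D.ψ (c * x) := by
    funext x
    rw [mul_add, D.ψ_add]
  have hintB : Integrable (fun x => D.ψ (c * (a + x))) (D.μ.restrict E) := by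
    rw [heq]
    exact hint.const_mul _
  have hSB : ∫ x, D.ψ (c * (a + x)) ∂(D.μ.restrict E)
      = ∑' i, ((D.μ.restrict E) ((fun z => (-a) + z) ''
          disjointed (fun i => (fun z => g i + z) '' D.Kc c) i)).toReal • D.ψ (c * g i) := by
    rw [← setIntegral_univ, ← hBU,
      integral_iUnion_ae hBnm (fun i j hij => ((hBdisj hij).aedisjoint))
        (by rw [hBU, IntegrableOn, Measure.restrict_univ]; exact hintB)]
    refine tsum_congr fun i => ?_
    rw [setIntegral_congr_ae₀ (hBnm i)
      (Filter.Eventually.of_forall (fun x hx => hBval i x hx)), setIntegral_const, measureReal_def]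
  have hνB : ∀ i, (D.μ.restrict E) ((fun z => (-a) + z) ''
      disjointed (fun i => (fun z => g i + z) '' D.Kc c) i)
      = (D.μ.restrict E) (disjointed (fun i => (fun z => g i + z) '' D.Kc c) i) := by
    intro i
    rw [Measure.restrict_apply' hEm, Measure.restrict_apply' hEm]
    exact D.trace_translate hEm.nullMeasurableSet hsE hμE (D.neg_mem_Ball ha) _
  have hmain : ∫ x, D.ψ (c * (a + x)) ∂(D.μ.restrict E)
      = ∫ x, D.ψ (c * x) ∂(D.μ.restrict E) := by
    rw [hSB, hSval]
    exact tsum_congr fun i => by rw [hνB i]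
  have hmul : ∫ x, D.ψ (c * (a + x)) ∂(D.μ.restrict E)
      = D.ψ (c * a) * ∫ x, D.ψ (c * x) ∂(D.μ.restrict E) := by
    rw [heq]
    exact integral_const_mul _ _
  have hzero : (D.ψ (c * a) - 1) * ∫ x, D.ψ (c * x) ∂(D.μ.restrict E) = 0 := by
    rw [sub_mul, one_mul, ← hmul, hmain, sub_self]
  rcases mul_eq_zero.1 hzero with h | h
  · exact absurd (sub_eq_zero.1 h) hψa
  · exact h

end Integral

end NonarchLocalField

/-- Equation (4.1): for `m > 0` and `|b| > q^{2m}`,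
`∫_{ϖ^m O} ∫_{ϖ^m O} ψ(bxy) dx dy = |b|⁻¹`. -/
theorem double_integral_gaussian_pairing {F : Type} [Field F] [MeasurableSpace F]
    (D : NonarchLocalField F) (m : ℕ) (hm : 0 < m) (b : F) (hb : b ≠ 0)
    (hbig : D.q ^ (2 * m) < D.abv b) :
    ∫ y in (fun z => D.ϖ ^ m * z) '' (D.O : Set F),
      ∫ x in (fun z => D.ϖ ^ m * z) '' (D.O : Set F), D.ψ (b * x * y) ∂D.μ ∂D.μ
      = ((D.abv b : ℂ))⁻¹ := by
  classical
  obtain ⟨n, hn⟩ := D.abv_discrete b hb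
  have h2m : (2 * m : ℤ) < n := by
    have h1 := hbig
    rw [hn, ← zpow_natCast D.q (2 * m)] at h1
    have h2 := (zpow_lt_zpow_iff_right₀ D.one_lt_q).1 h1
    exact_mod_cast h2
  -- the domain is the ball of radius q^(-m)
  have hs : (fun z => D.ϖ ^ m * z) '' (D.O : Set F) = D.Ball (-(m : ℤ)) := by
    rw [D.Ball_eq_image (-(m : ℤ)), neg_neg, zpow_natCast]
  set E := toMeasurable D.μ (D.Ball (-(m : ℤ))) with hE
  have hEm : MeasurableSet E := measurableSet_toMeasurable _ _
  have hsE : D.Ball (-(m : ℤ)) ⊆ E := subset_toMeasurable _ _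
  have hμE : D.μ E = D.μ (D.Ball (-(m : ℤ))) := measure_toMeasurable _
  have hrestrict : D.μ.restrict ((fun z => D.ϖ ^ m * z) '' (D.O : Set F))
      = D.μ.restrict E := by
    rw [hs, hE, Measure.restrict_toMeasurable (D.mu_Ball_ne_top _)]
  -- evaluation of the inner integral
  have hinner : ∀ y : F, (∫ x in E, D.ψ (b * x * y) ∂D.μ)
      = if D.abv (b * y) ≤ D.q ^ (m : ℤ) then ((D.q ^ (-(m : ℤ)) : ℝ) : ℂ) else 0 := by
    intro y
    have hcongr : (∫ x in E, D.ψ (b * x * y) ∂D.μ) = ∫ x in E, D.ψ ((b * y) * x) ∂D.μ :=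
      integral_congr_ae (Filter.Eventually.of_forall fun x => by show D.ψ (b * x * y) = D.ψ ((b * y) * x); rw [mul_right_comm])
    rw [hcongr]
    by_cases hy : D.abv (b * y) ≤ D.q ^ (m : ℤ)
    · rw [if_pos hy]
      have hsub : D.Ball (-(m : ℤ)) ⊆ D.Kc (b * y) :=
        D.Ball_subset_Kc (l := (m : ℤ)) hy (by omega)
      rw [D.integral_psi_one hEm hsE hμE hsub, hμE, D.mu_Ball,
        ENNReal.toReal_ofReal (D.zq_pos _).le]
    · rw [if_neg hy]
      push_neg at hy
      have hby0 : b * y ≠ 0 := by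
        rintro h
        rw [h, D.abv_zero] at hy
        exact absurd (D.zq_pos (m : ℤ)).le (not_le.2 hy)
      have hge : D.q ^ ((m : ℤ) + 1) ≤ D.abv (b * y) := D.abv_ge_of_gt hy
      obtain ⟨x₀, hx₀q, hx₀⟩ := D.ψ_nontriv
      have hx₀0 : x₀ ≠ 0 := fun h => hx₀ (h ▸ D.ψ_zero)
      have hamem : x₀ * (b * y)⁻¹ ∈ D.Ball (-(m : ℤ)) := by
        rw [D.mem_Ball, D.abv_mul, D.abv_inv hby0]
        have hinv : (D.abv (b * y))⁻¹ ≤ (D.q ^ ((m : ℤ) + 1))⁻¹ :=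
          inv_anti₀ (D.zq_pos _) hge
        calc D.abv x₀ * (D.abv (b * y))⁻¹ ≤ D.q * (D.q ^ ((m : ℤ) + 1))⁻¹ :=
              mul_le_mul hx₀q hinv (inv_nonneg.mpr (D.abv_nonneg _)) D.q_pos.le
          _ = D.q ^ (-(m : ℤ)) := by
              have h1 : D.q ^ (m : ℤ) ≠ 0 := (D.zq_pos _).ne'
              rw [zpow_add₀ D.q_ne_zero, zpow_one, zpow_neg, mul_inv]
              rw [← mul_assoc, mul_comm D.q (D.q ^ (m:ℤ))⁻¹, mul_assoc,
                mul_inv_cancel₀ D.q_ne_zero, mul_one]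
      have hψa : D.ψ ((b * y) * (x₀ * (b * y)⁻¹)) ≠ 1 := by
        rw [show (b * y) * (x₀ * (b * y)⁻¹) = x₀ by rw [mul_comm x₀, mul_inv_cancel_left₀ hby0]]
        exact hx₀
      exact D.integral_psi_zero hEm hsE hμE hby0 hamem hψa
  -- rewrite the whole double integral
  have houter1 : (∫ y in (fun z => D.ϖ ^ m * z) '' (D.O : Set F),
        ∫ x in (fun z => D.ϖ ^ m * z) '' (D.O : Set F), D.ψ (b * x * y) ∂D.μ ∂D.μ)
      = ∫ y in E,
          (if D.abv (b * y) ≤ D.q ^ (m : ℤ) then ((D.q ^ (-(m : ℤ)) : ℝ) : ℂ) else 0) ∂D.μ := by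
    rw [hrestrict]
    exact integral_congr_ae (Filter.Eventually.of_forall fun y => hinner y)
  -- the "dual ball" envelope
  set E₀ := toMeasurable D.μ (D.Ball ((m : ℤ) - n)) ∩ E with hE₀
  have hE₀m : MeasurableSet E₀ := (measurableSet_toMeasurable _ _).inter hEm
  have hBallE : D.Ball ((m : ℤ) - n) ⊆ E := (D.Ball_mono (by omega)).trans hsE
  have hBallE₀ : D.Ball ((m : ℤ) - n) ⊆ E₀ :=
    Set.subset_inter (subset_toMeasurable _ _) hBallE
  have hμE₀ : D.μ E₀ = D.μ (D.Ball ((m : ℤ) - n)) := by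
    refine le_antisymm ?_ (measure_mono hBallE₀)
    calc D.μ E₀ ≤ D.μ (toMeasurable D.μ (D.Ball ((m : ℤ) - n))) :=
          measure_mono Set.inter_subset_left
      _ = D.μ (D.Ball ((m : ℤ) - n)) := measure_toMeasurable _
  have hE₀K : ∀ c : F, c ≠ 0 → D.abv c ≤ D.q ^ (n - m : ℤ) → D.μ (E₀ \ D.Kc c) = 0 := by
    intro c hc0 hcle
    exact D.env_diff_null hBallE₀ hμE₀ (D.mu_Ball_ne_top _) (D.nm_Kc c)
      (D.Ball_subset_Kc hcle (by omega))
  have hjunk : D.μ (E₀ \ D.Ball ((m : ℤ) - n)) = 0 := by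
    have hcover : E₀ \ D.Ball ((m : ℤ) - n)
        ⊆ ⋃ t : ℕ, E₀ ∩ {x : F | D.abv x = D.q ^ ((m : ℤ) - n + 1 + t)} := by
      rintro y ⟨hyE₀, hyB⟩
      rw [D.mem_Ball] at hyB
      push_neg at hyB
      have hy0 : y ≠ 0 := by
        rintro rfl
        rw [D.abv_zero] at hyB
        exact absurd (D.zq_pos _).le (not_le.2 hyB)
      obtain ⟨p, hp⟩ := D.abv_discrete y hy0
      have hpge : (m : ℤ) - n + 1 ≤ p := by
        rw [hp] at hyB
        have := (zpow_lt_zpow_iff_right₀ D.one_lt_q).1 hyB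
        omega
      refine Set.mem_iUnion.2 ⟨(p - ((m : ℤ) - n + 1)).toNat, hyE₀, ?_⟩
      rw [Set.mem_setOf_eq, hp]
      congr 1
      omega
    refine measure_mono_null hcover (measure_iUnion_null fun t => ?_)
    exact D.shell_null hE₀m.nullMeasurableSet (l := (n - m : ℤ)) hE₀K (by omega)
  -- identify the region where the inner integral is nonzero
  have hS₀ : ∀ y : F, (D.abv (b * y) ≤ D.q ^ (m : ℤ)) ↔ y ∈ D.Ball ((m : ℤ) - n) := by
    intro y
    rw [D.mem_Ball, D.abv_mul, hn]
    constructor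
    · intro h
      have h2 : D.q ^ n * D.abv y * (D.q ^ n)⁻¹ ≤ D.q ^ (m : ℤ) * (D.q ^ n)⁻¹ :=
        mul_le_mul_of_nonneg_right h (inv_nonneg.mpr (D.zq_pos n).le)
      calc D.abv y = D.q ^ n * D.abv y * (D.q ^ n)⁻¹ := by
            have h1 : D.q ^ n ≠ 0 := (D.zq_pos n).ne'
            field_simp
        _ ≤ D.q ^ (m : ℤ) * (D.q ^ n)⁻¹ := h2
        _ = D.q ^ ((m : ℤ) - n) := by
            rw [sub_eq_add_neg, zpow_add₀ D.q_ne_zero, zpow_neg]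
    · intro h
      calc D.q ^ n * D.abv y ≤ D.q ^ n * D.q ^ ((m : ℤ) - n) :=
            mul_le_mul_of_nonneg_left h (D.zq_pos n).le
        _ = D.q ^ (m : ℤ) := by
            rw [← zpow_add₀ D.q_ne_zero]
            congr 1
            ring
  have hae2 : (fun y => if D.abv (b * y) ≤ D.q ^ (m : ℤ) then ((D.q ^ (-(m : ℤ)) : ℝ) : ℂ) else 0)
      =ᵐ[D.μ.restrict E] (E₀.indicator fun _ => ((D.q ^ (-(m : ℤ)) : ℝ) : ℂ)) := by
    rw [Filter.EventuallyEq, ae_iff]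
    rw [Measure.restrict_apply' hEm]
    refine measure_mono_null ?_ hjunk
    intro y hy
    obtain ⟨hne, _⟩ := hy
    by_cases hyB : y ∈ D.Ball ((m : ℤ) - n)
    · exfalso
      apply hne
      show (if D.abv (b * y) ≤ D.q ^ (m : ℤ) then ((D.q ^ (-(m : ℤ)) : ℝ) : ℂ) else 0) = _
      rw [if_pos ((hS₀ y).2 hyB), Set.indicator_of_mem (hBallE₀ hyB)]
    · refine ⟨?_, hyB⟩
      by_contra hyE₀
      apply hne
      show (if D.abv (b * y) ≤ D.q ^ (m : ℤ) then ((D.q ^ (-(m : ℤ)) : ℝ) : ℂ) else 0) = _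
      rw [if_neg (fun h => hyB ((hS₀ y).1 h)), Set.indicator_of_notMem hyE₀]
  rw [houter1, integral_congr_ae hae2, integral_indicator hE₀m, setIntegral_const]
  have hres : (D.μ.restrict E) E₀ = D.μ E₀ := by
    rw [Measure.restrict_apply' hEm,
      Set.inter_eq_self_of_subset_left Set.inter_subset_right]
  rw [measureReal_def, hres, hμE₀, D.mu_Ball, ENNReal.toReal_ofReal (D.zq_pos _).le]
  rw [Complex.real_smul, hn]
  rw [← Complex.ofReal_mul, ← Complex.ofReal_inv]
  congr 1
  rw [← zpow_neg, ← zpow_add₀ D.q_ne_zero]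
  congr 1
  ring
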